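/- Let phi(s) = f(x - s nabla f(x)) with f convex differentiable and nabla f(x) != 0. Suppose the doubling loop of Algorithm 5 terminates with step s such that phi'(s) < 0 <= phi'(cs) for c > 1. Then the returned point x_new = x - s nabla f(x) satisfies f(x_new) < f(x) and f(x_new) <= f(x - t nabla f(x)) + (phi(s) - min_{t in [0, cs]} phi(t)) for the minimizer; in particular f(x_new) - min_t phi(t) <= phi(s) - phi(s_opt) <= |phi'(s)| * (cs - s) <= (c-1) s |phi'(s)|. -/

import Mathlib

open scoped RealInnerProductSpace

/-- Quality estimate for the gradient-based inexact line search (Algorithm 5): let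
`φ(t) = f (x - t • ∇f x)` with `f` convex differentiable and `∇f x ≠ 0`, whose derivative
is `φ'(t) = -⟪∇f x, ∇f (x - t • ∇f x)⟫`. If the doubling loop terminates with `s > 0`
such that `φ'(s) < 0 ≤ φ'(c*s)` for `c > 1`, then the returned point
`x_new = x - s • ∇f x` satisfies `f x_new < f x`, and for any global minimizer `s_opt`
of `φ`, `φ(s) - φ(s_opt) ≤ |φ'(s)| * (c*s - s) = (c-1) * s * |φ'(s)|`. -/
theorem stmt19 (n : ℕ) (f : EuclideanSpace ℝ (Fin n) → ℝ)
    (gf : EuclideanSpace ℝ (Fin n) → EuclideanSpace ℝ (Fin n))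
    (hgrad : ∀ y, HasGradientAt f (gf y) y)
    (hconv : ConvexOn ℝ Set.univ f)
    (x : EuclideanSpace ℝ (Fin n)) (hx : gf x ≠ 0)
    (φ : ℝ → ℝ) (hφ : ∀ t, φ t = f (x - t • gf x))
    (dφ : ℝ → ℝ) (hdφ : ∀ t, dφ t = -⟪gf x, gf (x - t • gf x)⟫)
    (s c : ℝ) (hs : 0 < s) (hc : 1 < c)
    (hneg : dφ s < 0) (hpos : 0 ≤ dφ (c * s)) :
    f (x - s • gf x) < f x
    ∧ ∀ sopt : ℝ, (∀ t : ℝ, φ sopt ≤ φ t) →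
        φ s - φ sopt ≤ |dφ s| * (c * s - s)
        ∧ |dφ s| * (c * s - s) = (c - 1) * s * |dφ s| := by
  -- the line `L t = x - t • gf x` as an affine map
  set v := gf x with hv
  -- derivative of φ
  have hφd : ∀ t : ℝ, HasDerivAt φ (dφ t) t := by
    intro t
    have hL : HasDerivAt (fun t : ℝ => x - t • v) (-v) t := by
      simpa using ((hasDerivAt_id t).smul_const v).const_sub x
    have hF : HasFDerivAt f ((InnerProductSpace.toDual ℝ _) (gf (x - t • v))) (x - t • v) :=
      (hasGradientAt_iff_hasFDerivAt.mp (hgrad (x - t • v)))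
    have hcomp := hF.comp_hasDerivAt t hL
    have : HasDerivAt (fun t : ℝ => f (x - t • v)) (⟪gf (x - t • v), -v⟫) t := by
      simpa [Function.comp_def] using hcomp
    have heq : (fun t : ℝ => f (x - t • v)) = φ := by
      funext u; rw [hφ u]
    rw [heq] at this
    convert this using 1
    rw [hdφ t, real_inner_comm, inner_neg_right]
  -- convexity of φ
  have hφc : ConvexOn ℝ Set.univ φ := by
    have hA := hconv.comp_affineMap (AffineMap.lineMap x (x - v))
    have : (f ∘ (AffineMap.lineMap x (x - v))) = φ := by
      funext t
      simp [AffineMap.lineMap_apply, hφ t, smul_sub, sub_eq_add_neg, add_comm]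
    rw [this] at hA
    simpa using hA
  have hmem : ∀ t : ℝ, t ∈ (Set.univ : Set ℝ) := fun _ => Set.mem_univ _
  -- first part : φ s < φ 0
  have hφ0 : φ 0 = f x := by rw [hφ]; simp
  have hscs : s < c * s := by nlinarith
  have hpart1 : φ s < φ 0 := by
    have hsl := hφc.slope_le_of_hasDerivAt (hmem 0) (hmem s) hs (hφd s)
    rw [slope_def_field] at hsl
    have : (φ s - φ 0) / (s - 0) < 0 := lt_of_le_of_lt hsl hneg
    have hd := (div_neg_iff).mp this
    rcases hd with ⟨h1, h2⟩ | ⟨h1, h2⟩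
    · linarith
    · linarith
  refine ⟨by rw [← hφ s, ← hφ0]; exact hpart1, ?_⟩
  intro sopt hopt
  have habs : |dφ s| = -dφ s := abs_of_neg hneg
  constructor
  · -- key bound
    -- sopt ≥ s
    have hsle : s ≤ sopt := by
      by_contra h
      push_neg at h
      have hsl := hφc.slope_le_of_hasDerivAt (hmem sopt) (hmem s) h (hφd s)
      rw [slope_def_field] at hsl
      have : (φ s - φ sopt) / (s - sopt) < 0 := lt_of_le_of_lt hsl hneg
      rcases (div_neg_iff).mp this with ⟨h1, h2⟩ | ⟨h1, h2⟩
      · linarith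
      · linarith [hopt s]
    rcases eq_or_lt_of_le hsle with rfl | hlt
    · have : (0:ℝ) ≤ |dφ s| * (c * s - s) :=
        mul_nonneg (abs_nonneg _) (by linarith)
      linarith
    -- set u = min sopt (c*s)
    set u := min sopt (c * s) with hu
    have hsu : s < u := lt_min hlt hscs
    have hucs : u ≤ c * s := min_le_right _ _
    have hφu : φ u = φ sopt := by
      rcases le_or_gt sopt (c * s) with h | h
      · rw [hu, min_eq_left h]
      · rw [hu, min_eq_right h.le]
        have hsl := hφc.le_slope_of_hasDerivAt (hmem (c*s)) (hmem sopt) h (hφd (c*s))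
        rw [slope_def_field] at hsl
        have h0 : (0:ℝ) ≤ (φ sopt - φ (c*s)) / (sopt - c*s) := le_trans hpos hsl
        have hden : (0:ℝ) < sopt - c*s := by linarith
        have := (div_nonneg_iff).mp h0
        have hcse : φ (c*s) ≤ φ sopt := by
          rcases this with ⟨h1, h2⟩ | ⟨h1, h2⟩
          · linarith
          · linarith
        linarith [hopt (c*s)]
    have hsl := hφc.le_slope_of_hasDerivAt (hmem s) (hmem u) hsu (hφd s)
    rw [slope_def_field] at hsl
    have hden : (0:ℝ) < u - s := by linarith
    have h1 : dφ s * (u - s) ≤ φ u - φ s := by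
      calc dφ s * (u - s) ≤ ((φ u - φ s) / (u - s)) * (u - s) := by
            apply mul_le_mul_of_nonneg_right hsl hden.le
        _ = φ u - φ s := by field_simp
    have h2 : φ s - φ u ≤ -dφ s * (u - s) := by linarith
    have h3 : -dφ s * (u - s) ≤ -dφ s * (c * s - s) := by
      apply mul_le_mul_of_nonneg_left (by linarith) (by linarith)
    rw [habs, ← hφu]
    linarith
  · ring
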